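/- For every integer m ≥ 0, one has 4 · a₆(3m+1) = (−1)^{m+1} · r(3m+1), i.e. 4 · ∑_{d | 3m+1, d odd, d > 0} ξ(2(3m+1)/d − d) = (−1)^{m+1} · r(3m+1). -/

import Mathlib

/-- `ξ m` for odd `m`, determined by the residue of `m` modulo 12. -/
def xi (m : ℤ) : ℤ :=
  if m % 12 = 1 ∨ m % 12 = 5 then -1
  else if m % 12 = 3 then -2
  else if m % 12 = 7 ∨ m % 12 = 11 then 1
  else if m % 12 = 9 then 2
  else 0

/-- `a₆ n = ∑ ξ(2n/d − d)` over odd positive divisors `d` of `n`. -/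
def a6 (n : ℕ) : ℤ :=
  ∑ d ∈ n.divisors.filter (fun d => Odd d), xi (2 * ((n : ℤ) / (d : ℤ)) - (d : ℤ))

/-- `r n` is the number of representations of `n` as a sum of two squares of integers. -/
noncomputable def r (n : ℕ) : ℕ := Set.ncard {p : ℤ × ℤ | p.1 ^ 2 + p.2 ^ 2 = (n : ℤ)}


open Zsqrtd GaussianInt Finset

local notation "ℤ[i]" => GaussianInt

/-- The nontrivial character mod 4. -/
def chi (d : ℕ) : ℤ := if d % 4 = 1 then 1 else if d % 4 = 3 then -1 else 0

lemma chi_one : chi 1 = 1 := by decide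

lemma chi_mul (m n : ℕ) : chi (m * n) = chi m * chi n := by
  have hm : m % 4 < 4 := Nat.mod_lt _ (by norm_num)
  have hn : n % 4 < 4 := Nat.mod_lt _ (by norm_num)
  unfold chi
  rw [Nat.mul_mod]
  generalize hA : m % 4 = a at *
  generalize hB : n % 4 = b at *
  interval_cases a <;> interval_cases b <;> decide

/-- The Finset of Gaussian integers of norm `n`. -/
noncomputable def FS (n : ℕ) : Finset ℤ[i] :=
  ((Finset.Icc (-(n:ℤ)) n ×ˢ Finset.Icc (-(n:ℤ)) n).map
    ⟨fun p => ⟨p.1, p.2⟩, fun p q h => by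
      cases p; cases q; simpa [Zsqrtd.ext_iff, Prod.ext_iff] using h⟩).filter
    (fun z => z.norm = n)

lemma norm_eq (z : ℤ[i]) : z.norm = z.re * z.re + z.im * z.im := by
  rw [Zsqrtd.norm_def]; ring

lemma mem_FS {n : ℕ} {z : ℤ[i]} : z ∈ FS n ↔ z.norm = n := by
  constructor
  · intro h; exact (Finset.mem_filter.mp h).2
  · intro h
    refine Finset.mem_filter.mpr ⟨?_, h⟩
    refine Finset.mem_map.mpr ⟨(z.re, z.im), ?_, rfl⟩
    have h1 : z.re * z.re + z.im * z.im = (n : ℤ) := by rw [← norm_eq, h]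
    have h2 : z.re * z.re ≤ (n:ℤ) := by nlinarith [mul_self_nonneg z.im]
    have h3 : z.im * z.im ≤ (n:ℤ) := by nlinarith [mul_self_nonneg z.re]
    have hb : ∀ x : ℤ, x * x ≤ (n:ℤ) → -(n:ℤ) ≤ x ∧ x ≤ (n:ℤ) := by
      intro x hx
      constructor <;> nlinarith [mul_self_nonneg x, Int.natCast_nonneg n]
    simp only [Finset.mem_product, Finset.mem_Icc]
    exact ⟨hb _ h2, hb _ h3⟩

lemma FS_one_card : (FS 1).card = 4 := by decide

lemma unit_mem {u : ℤ[i]} (h : u.norm = 1) :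
    u = ⟨1,0⟩ ∨ u = ⟨-1,0⟩ ∨ u = ⟨0,1⟩ ∨ u = ⟨0,-1⟩ := by
  have h1 : u.re * u.re + u.im * u.im = 1 := by rw [← norm_eq, h]
  have h2 : u.re * u.re ≤ 1 := by nlinarith [mul_self_nonneg u.im]
  have h3 : -1 ≤ u.re ∧ u.re ≤ 1 := by constructor <;> nlinarith
  have h2' : u.im * u.im ≤ 1 := by nlinarith [mul_self_nonneg u.re]
  have h3' : -1 ≤ u.im ∧ u.im ≤ 1 := by constructor <;> nlinarith
  obtain ⟨x, y⟩ := u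
  simp only [Zsqrtd.ext_iff] at *
  rcases h3 with ⟨h4, h5⟩
  rcases h3' with ⟨h6, h7⟩
  interval_cases x <;> interval_cases y <;> simp_all
lemma norm_dvd_of_dvd {a b : ℤ[i]} (h : a ∣ b) : a.norm ∣ b.norm := by
  obtain ⟨c, rfl⟩ := h; rw [Zsqrtd.norm_mul]; exact dvd_mul_right _ _

lemma star_dvd_of_dvd {a b : ℤ[i]} (h : a ∣ b) : star a ∣ star b := by
  obtain ⟨c, rfl⟩ := h; exact ⟨star c, by rw [star_mul, mul_comm]⟩

set_option synthInstance.maxHeartbeats 1000000 in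
lemma prime_of_norm_prime {z : ℤ[i]} (h : Prime z.norm) : Prime z := by
  rw [← irreducible_iff_prime]
  constructor
  · intro hu
    rw [← Zsqrtd.norm_eq_one_iff' (by norm_num) z] at hu
    rw [hu] at h
    exact h.not_unit isUnit_one
  · intro a b hab
    have hn : z.norm = a.norm * b.norm := by rw [hab, Zsqrtd.norm_mul]
    rcases h.irreducible.isUnit_or_isUnit hn with hu | hu
    · left
      rw [← Zsqrtd.norm_eq_one_iff' (by norm_num) a]
      rcases Int.isUnit_iff.mp hu with h1 | h1
      · exact h1
      · exfalso; have := GaussianInt.norm_nonneg a; omega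
    · right
      rw [← Zsqrtd.norm_eq_one_iff' (by norm_num) b]
      rcases Int.isUnit_iff.mp hu with h1 | h1
      · exact h1
      · exfalso; have := GaussianInt.norm_nonneg b; omega

lemma norm_cast_eq_mul_star (z : ℤ[i]) : ((z.norm : ℤ) : ℤ[i]) = z * star z :=
  Zsqrtd.norm_eq_mul_conj z

/-- For `p` prime with `p % 4 ≠ 3`, there is a Gaussian prime of norm `p`. -/
lemma exists_prime_norm (p : ℕ) (hp : p.Prime) (h4 : p % 4 ≠ 3) :
    ∃ π : ℤ[i], Prime π ∧ π.norm = p := by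
  haveI := Fact.mk hp
  obtain ⟨a, b, hab⟩ := Nat.Prime.sq_add_sq (p := p) h4
  refine ⟨⟨(a : ℤ), (b : ℤ)⟩, ?_, ?_⟩
  · apply prime_of_norm_prime
    have : Zsqrtd.norm (⟨(a : ℤ), (b : ℤ)⟩ : ℤ[i]) = (p : ℤ) := by
      rw [norm_eq]; push_cast; nlinarith
    rw [this]
    exact Nat.prime_iff_prime_int.mp hp
  · rw [norm_eq]; push_cast; nlinarith

/-- If a prime `p ≢ 3 (mod 4)` divides the norm of `z`, then some Gaussian
prime of norm `p` divides `z`. -/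
lemma exists_prime_norm_dvd (p : ℕ) (hp : p.Prime) (h4 : p % 4 ≠ 3) {z : ℤ[i]}
    (hdvd : (p : ℤ) ∣ z.norm) : ∃ π : ℤ[i], Prime π ∧ π.norm = p ∧ π ∣ z := by
  obtain ⟨π, hπ, hn⟩ := exists_prime_norm p hp h4
  have hπp : π ∣ ((p : ℕ) : ℤ[i]) := by
    refine ⟨star π, ?_⟩
    have := norm_cast_eq_mul_star π
    rw [hn] at this
    exact_mod_cast this
  have hzz : π ∣ z * star z := by
    refine hπp.trans ?_
    obtain ⟨k, hk⟩ := hdvd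
    rw [← norm_cast_eq_mul_star, hk]
    push_cast
    exact Dvd.intro _ rfl
  rcases hπ.dvd_or_dvd hzz with h | h
  · exact ⟨π, hπ, hn, h⟩
  · refine ⟨star π, ?_, ?_, ?_⟩
    · apply prime_of_norm_prime; rw [Zsqrtd.norm_conj, hn]; exact Nat.prime_iff_prime_int.mp hp
    · rw [Zsqrtd.norm_conj, hn]
    · have := star_dvd_of_dvd h
      rwa [star_star] at this

/-- Key splitting lemma: a Gaussian integer whose norm is a product of coprime
naturals splits as a corresponding product. -/
lemma split : ∀ m n : ℕ, Nat.Coprime m n → ∀ z : ℤ[i], z.norm = (m : ℤ) * n →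
    ∃ a b : ℤ[i], z = a * b ∧ a.norm = m ∧ b.norm = n := by
  intro m
  induction m using Nat.strong_induction_on with
  | _ m IH =>
  intro n hco z hz
  by_cases hm0 : m = 0
  · subst hm0
    have hn1 : n = 1 := Nat.coprime_zero_left n |>.mp hco
    subst hn1
    have : z = 0 := by
      rw [← GaussianInt.norm_eq_zero]; rw [hz]; norm_num
    exact ⟨0, 1, by simp [this], by simp, by simp⟩
  by_cases hm1 : m = 1
  · subst hm1
    exact ⟨1, z, (one_mul z).symm, by simp, by rw [hz]; push_cast; ring⟩
  -- m ≥ 2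
  have hp : m.minFac.Prime := Nat.minFac_prime hm1
  set p := m.minFac with hp_def
  have hpm : p ∣ m := Nat.minFac_dvd m
  have hpn : ¬ p ∣ n := by
    intro h
    have h1 : p ∣ 1 := hco ▸ Nat.dvd_gcd hpm h
    have h2 := Nat.le_of_dvd one_pos h1
    have := hp.two_le
    omega
  have hpdvdnorm : (p : ℤ) ∣ z.norm := by
    obtain ⟨t, ht⟩ := hpm
    rw [hz, ht]
    exact ⟨(t : ℤ) * n, by push_cast; ring⟩
  by_cases h43 : p % 4 = 3
  · -- p ≡ 3 (mod 4): p is a Gaussian prime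
    haveI := Fact.mk hp
    have hprime : Prime ((p : ℕ) : ℤ[i]) :=
      GaussianInt.prime_of_nat_prime_of_mod_four_eq_three p h43
    have hzz : ((p : ℕ) : ℤ[i]) ∣ z * star z := by
      obtain ⟨k, hk⟩ := hpdvdnorm
      rw [← norm_cast_eq_mul_star, hk]
      push_cast
      exact Dvd.intro _ rfl
    have hpz : ((p : ℕ) : ℤ[i]) ∣ z := by
      rcases hprime.dvd_or_dvd hzz with h | h
      · exact h
      · have := star_dvd_of_dvd h
        rwa [star_star, star_natCast] at this
    obtain ⟨w, hw⟩ := hpz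
    have hnw : (p : ℤ) * p * w.norm = (m : ℤ) * n := by
      rw [← hz, hw, Zsqrtd.norm_mul, Zsqrtd.norm_natCast]
    -- p^2 divides m
    have hwnonneg : 0 ≤ w.norm := GaussianInt.norm_nonneg w
    obtain ⟨k, hk⟩ : ∃ k : ℕ, w.norm = (k : ℤ) := ⟨w.norm.toNat, (Int.toNat_of_nonneg hwnonneg).symm⟩
    have hnat : p * p * k = m * n := by
      have := hnw
      rw [hk] at this
      exact_mod_cast this
    have hco2 : Nat.Coprime (p * p) n :=
      Nat.Coprime.mul (hp.coprime_iff_not_dvd.mpr hpn) (hp.coprime_iff_not_dvd.mpr hpn)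
    have hppm : p * p ∣ m := hco2.dvd_of_dvd_mul_right ⟨k, hnat.symm⟩
    obtain ⟨m', hm'⟩ := hppm
    have hm'lt : m' < m := by
      have h2 : 2 ≤ p := hp.two_le
      have h4 : 4 ≤ p * p := Nat.mul_le_mul h2 h2
      rcases Nat.eq_zero_or_pos m' with h | h
      · omega
      · have h5 : 4 * m' ≤ p * p * m' := Nat.mul_le_mul h4 le_rfl
        omega
    have hco' : Nat.Coprime m' n := Nat.Coprime.coprime_dvd_left ⟨p * p, by rw [hm']; ring⟩ hco
    have hwn : w.norm = (m' : ℤ) * n := by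
      have h1 : (p : ℤ) * p * w.norm = (p : ℤ) * p * ((m' : ℤ) * n) := by
        rw [hnw, hm']; push_cast; ring
      have hp0 : (p : ℤ) * p ≠ 0 := by
        have := hp.pos; positivity
      exact mul_left_cancel₀ hp0 h1
    obtain ⟨a', b', hab, ha, hb⟩ := IH m' hm'lt n hco' w hwn
    refine ⟨((p : ℕ) : ℤ[i]) * a', b', ?_, ?_, hb⟩
    · rw [hw, hab]; ring
    · rw [Zsqrtd.norm_mul, Zsqrtd.norm_natCast, ha, hm']; push_cast; ring
  · -- p ≢ 3 (mod 4): there is a Gaussian prime of norm p dividing z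
    obtain ⟨π, hπ, hnπ, hπz⟩ := exists_prime_norm_dvd p hp h43 hpdvdnorm
    obtain ⟨w, hw⟩ := hπz
    have hnw : (p : ℤ) * w.norm = (m : ℤ) * n := by
      rw [← hz, hw, Zsqrtd.norm_mul, hnπ]
    obtain ⟨m', hm'⟩ := hpm
    have hm'lt : m' < m := by
      have h2 : 2 ≤ p := hp.two_le
      rcases Nat.eq_zero_or_pos m' with h | h
      · omega
      · have h5 : 2 * m' ≤ p * m' := Nat.mul_le_mul h2 le_rfl
        omega
    have hco' : Nat.Coprime m' n := Nat.Coprime.coprime_dvd_left ⟨p, by rw [hm']; ring⟩ hco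
    have hwn : w.norm = (m' : ℤ) * n := by
      have h1 : (p : ℤ) * w.norm = (p : ℤ) * ((m' : ℤ) * n) := by
        rw [hnw, hm']; push_cast; ring
      have hp0 : (p : ℤ) ≠ 0 := by exact_mod_cast hp.pos.ne'
      exact mul_left_cancel₀ hp0 h1
    obtain ⟨a', b', hab, ha, hb⟩ := IH m' hm'lt n hco' w hwn
    refine ⟨π * a', b', ?_, ?_, hb⟩
    · rw [hw, hab]; ring
    · rw [Zsqrtd.norm_mul, hnπ, ha, hm']; push_cast; ring

lemma norm_natAbs_ge_two_of_irreducible {π : ℤ[i]} (h : Irreducible π) : 2 ≤ π.norm := by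
  have h0 : π ≠ 0 := h.ne_zero
  have h1 : π.norm ≠ 0 := fun hh => h0 (GaussianInt.norm_eq_zero.mp hh)
  have h2 : π.norm ≠ 1 := fun hh => h.not_isUnit ((Zsqrtd.norm_eq_one_iff' (by norm_num) π).mp hh)
  have := GaussianInt.norm_nonneg π
  omega

/-- Gaussian integers whose norms are coprime naturals are coprime. -/
lemma isCoprime_of_coprime_norm {a b : ℤ[i]} {m n : ℕ} (hm : a.norm = m) (hn : b.norm = n)
    (hmpos : 0 < m) (hco : Nat.Coprime m n) : IsCoprime a b := by
  rw [← EuclideanDomain.gcd_isUnit_iff]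
  by_contra hg
  have ha0 : a ≠ 0 := by
    intro h
    rw [h, Zsqrtd.norm_zero] at hm
    exact hmpos.ne' (by exact_mod_cast hm.symm)
  have hg0 : EuclideanDomain.gcd a b ≠ 0 := by
    intro h
    exact ha0 (EuclideanDomain.gcd_eq_zero_iff.mp h).1
  obtain ⟨π, hπ, hπg⟩ := WfDvdMonoid.exists_irreducible_factor hg hg0
  have hπa : π ∣ a := hπg.trans (EuclideanDomain.gcd_dvd_left a b)
  have hπb : π ∣ b := hπg.trans (EuclideanDomain.gcd_dvd_right a b)
  have h1 : π.norm ∣ (m : ℤ) := hm ▸ norm_dvd_of_dvd hπa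
  have h2 : π.norm ∣ (n : ℤ) := hn ▸ norm_dvd_of_dvd hπb
  have h3 : π.norm.natAbs ∣ m := by
    have := Int.natAbs_dvd_natAbs.mpr h1; simpa using this
  have h4 : π.norm.natAbs ∣ n := by
    have := Int.natAbs_dvd_natAbs.mpr h2; simpa using this
  have h5 : π.norm.natAbs ∣ 1 := hco ▸ Nat.dvd_gcd h3 h4
  have h6 := norm_natAbs_ge_two_of_irreducible hπ
  have h7 := Nat.le_of_dvd one_pos h5
  omega

/-- The 4-to-1 multiplication map: fibers of the map `FS m × FS n → FS (m*n)`. -/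
lemma fiber_card {m n : ℕ} (hm : 0 < m) (hn : 0 < n) (hco : Nat.Coprime m n)
    {z : ℤ[i]} (hz : z ∈ FS (m * n)) :
    ((FS m ×ˢ FS n).filter (fun p => p.1 * p.2 = z)).card = 4 := by
  have hznorm : z.norm = (m : ℤ) * n := by
    have := mem_FS.mp hz; rw [this]; push_cast; ring
  obtain ⟨a₀, b₀, hzab, ha₀, hb₀⟩ := split m n hco z hznorm
  have ha₀0 : a₀ ≠ 0 := by
    intro h
    rw [h, Zsqrtd.norm_zero] at ha₀
    exact hm.ne (by exact_mod_cast ha₀)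
  rw [← FS_one_card]
  symm
  apply Finset.card_bij (fun u _ => (a₀ * u, star u * b₀))
  · -- maps into the fiber
    intro u hu
    have hu1 : u.norm = 1 := by simpa using mem_FS.mp hu
    have huu : u * star u = 1 := by
      have := norm_cast_eq_mul_star u
      rw [hu1] at this
      exact_mod_cast this.symm
    refine Finset.mem_filter.mpr ⟨Finset.mem_product.mpr ⟨?_, ?_⟩, ?_⟩
    · exact mem_FS.mpr (by rw [Zsqrtd.norm_mul, ha₀, hu1, mul_one])
    · exact mem_FS.mpr (by rw [Zsqrtd.norm_mul, Zsqrtd.norm_conj, hu1, hb₀, one_mul])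
    · calc a₀ * u * (star u * b₀) = a₀ * b₀ * (u * star u) := by ring
        _ = z := by rw [huu, mul_one, hzab]
  · -- injective
    intro u hu u' hu' h
    have := congrArg Prod.fst h
    simp only at this
    exact mul_left_cancel₀ ha₀0 this
  · -- surjective
    intro p hp
    obtain ⟨hp1, hp2⟩ := Finset.mem_filter.mp hp
    obtain ⟨hpa, hpb⟩ := Finset.mem_product.mp hp1
    have hna : p.1.norm = (m : ℤ) := mem_FS.mp hpa
    have hnb : p.2.norm = (n : ℤ) := mem_FS.mp hpb
    have hcop : IsCoprime a₀ p.2 := isCoprime_of_coprime_norm ha₀ hnb hm hco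
    have hdvd : a₀ ∣ p.1 := hcop.dvd_of_dvd_mul_right
      (by rw [hp2, hzab]; exact dvd_mul_right _ _)
    obtain ⟨u, hu⟩ := hdvd
    have hu1 : u.norm = 1 := by
      have h1 : (m : ℤ) * 1 = (m : ℤ) * u.norm := by
        rw [mul_one]
        conv_lhs => rw [← hna, hu]
        rw [Zsqrtd.norm_mul, ha₀]
      have hm0 : (m : ℤ) ≠ 0 := by exact_mod_cast hm.ne'
      exact (mul_left_cancel₀ hm0 h1).symm
    have huu : u * star u = 1 := by
      have := norm_cast_eq_mul_star u
      rw [hu1] at this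
      exact_mod_cast this.symm
    refine ⟨u, mem_FS.mpr (by rw [hu1]; norm_num), ?_⟩
    have hub : u * p.2 = b₀ := by
      apply mul_left_cancel₀ ha₀0
      rw [← mul_assoc, ← hu, hp2, hzab]
    have hsnd : star u * b₀ = p.2 := by
      rw [← hub, ← mul_assoc, mul_comm (star u) u, huu, one_mul]
    exact Prod.ext hu.symm hsnd

lemma FS_card_mul {m n : ℕ} (hm : 0 < m) (hn : 0 < n) (hco : Nat.Coprime m n) :
    (FS m).card * (FS n).card = 4 * (FS (m * n)).card := by
  have hmap : ∀ p ∈ FS m ×ˢ FS n, p.1 * p.2 ∈ FS (m * n) := by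
    intro p hp
    obtain ⟨h1, h2⟩ := Finset.mem_product.mp hp
    apply mem_FS.mpr
    rw [Zsqrtd.norm_mul, mem_FS.mp h1, mem_FS.mp h2]
    push_cast; ring
  have := Finset.card_eq_sum_card_fiberwise hmap
  rw [Finset.card_product] at this
  rw [this, Finset.sum_congr rfl (fun z hz => fiber_card hm hn hco hz)]
  rw [Finset.sum_const, smul_eq_mul, mul_comm]

lemma not_prime_dvd_norm_one {π u : ℤ[i]} (hπ : Prime π) (hu : u.norm = 1) : ¬ π ∣ u := by
  intro h
  have h1 := norm_dvd_of_dvd h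
  rw [hu] at h1
  have h2 := norm_natAbs_ge_two_of_irreducible hπ.irreducible
  have h3 := Int.le_of_dvd one_pos h1
  omega

lemma norm_one_ne_zero {u : ℤ[i]} (hu : u.norm = 1) : u ≠ 0 := by
  intro h; rw [h, Zsqrtd.norm_zero] at hu; exact one_ne_zero hu.symm

/-- Every Gaussian integer of norm `p ^ k` has the shape `u * π ^ j * (star π) ^ (k - j)`. -/
lemma rep (π : ℤ[i]) (hπ : Prime π) (p : ℕ) (hnπ : π.norm = p) (hppos : 0 < p) :
    ∀ k : ℕ, ∀ z : ℤ[i], z.norm = (p : ℤ) ^ k →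
      ∃ (u : ℤ[i]) (j : ℕ), u.norm = 1 ∧ j ≤ k ∧ z = u * π ^ j * (star π) ^ (k - j) := by
  intro k
  induction k with
  | zero =>
    intro z hz
    exact ⟨z, 0, by simpa using hz, le_refl 0, by ring⟩
  | succ k IH =>
    intro z hz
    have hπp : π ∣ ((p : ℕ) : ℤ[i]) := by
      refine ⟨star π, ?_⟩
      have := norm_cast_eq_mul_star π
      rw [hnπ] at this
      exact_mod_cast this
    have hzz : π ∣ z * star z := by
      refine hπp.trans ?_
      rw [← norm_cast_eq_mul_star, hz]
      push_cast
      exact ⟨(p:ℤ[i])^k, by ring⟩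
    have hp0 : (p : ℤ) ≠ 0 := by exact_mod_cast hppos.ne'
    rcases hπ.dvd_or_dvd hzz with h | h
    · obtain ⟨w, hw⟩ := h
      have hwnorm : w.norm = (p : ℤ) ^ k := by
        have h1 : (p : ℤ) * w.norm = (p : ℤ) * (p : ℤ) ^ k := by
          rw [← hnπ, ← Zsqrtd.norm_mul, ← hw, hz, pow_succ, hnπ]; ring
        exact mul_left_cancel₀ hp0 h1
      obtain ⟨u, j, hu, hj, hrep⟩ := IH w hwnorm
      refine ⟨u, j + 1, hu, by omega, ?_⟩
      have : k + 1 - (j + 1) = k - j := by omega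
      rw [this, hw, hrep]; ring
    · have h' : star π ∣ z := by
        have := star_dvd_of_dvd h
        rwa [star_star] at this
      obtain ⟨w, hw⟩ := h'
      have hwnorm : w.norm = (p : ℤ) ^ k := by
        have h1 : (p : ℤ) * w.norm = (p : ℤ) * (p : ℤ) ^ k := by
          rw [← hnπ, ← Zsqrtd.norm_conj π, ← Zsqrtd.norm_mul, ← hw, hz, pow_succ, Zsqrtd.norm_conj, hnπ]
          ring
        exact mul_left_cancel₀ hp0 h1
      obtain ⟨u, j, hu, hj, hrep⟩ := IH w hwnorm
      refine ⟨u, j, hu, by omega, ?_⟩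
      have : k + 1 - j = (k - j) + 1 := by omega
      rw [this, hw, hrep]; ring

/-- Uniqueness of the representation when `π` and `star π` are non-associated. -/
lemma rep_inj (π : ℤ[i]) (hπ : Prime π) (hsp : Prime (star π)) (hnd : ¬ π ∣ star π)
    {u u' : ℤ[i]} (hu : u.norm = 1) (hu' : u'.norm = 1) {j j' k : ℕ} (hj : j ≤ k) (hj' : j' ≤ k)
    (h : u * π ^ j * (star π) ^ (k - j) = u' * π ^ j' * (star π) ^ (k - j')) :
    j = j' ∧ u = u' := by
  have hnd' : ¬ star π ∣ π := by
    intro hd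
    have := star_dvd_of_dvd hd
    rw [star_star] at this
    exact hnd this
  have hπ0 : π ≠ 0 := hπ.ne_zero
  have hsπ0 : star π ≠ 0 := hsp.ne_zero
  have hjj : j = j' := by
    rcases lt_trichotomy j j' with hlt | heq | hgt
    · exfalso
      have hdvd : π ^ (j + 1) ∣ u * π ^ j * (star π) ^ (k - j) := by
        rw [h]
        exact dvd_mul_of_dvd_left (dvd_mul_of_dvd_right (pow_dvd_pow π (by omega : j + 1 ≤ j')) u') _
      rw [show u * π ^ j * (star π) ^ (k - j) = π ^ j * (u * (star π) ^ (k - j)) by ring,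
        pow_succ, mul_dvd_mul_iff_left (pow_ne_zero j hπ0)] at hdvd
      rcases hπ.dvd_or_dvd hdvd with hd | hd
      · exact not_prime_dvd_norm_one hπ hu hd
      · exact hnd (hπ.dvd_of_dvd_pow hd)
    · exact heq
    · exfalso
      have hdvd : (star π) ^ ((k - j) + 1) ∣ u * π ^ j * (star π) ^ (k - j) := by
        rw [h]
        exact dvd_mul_of_dvd_right (pow_dvd_pow (star π) (by omega : (k - j) + 1 ≤ k - j')) _
      rw [show u * π ^ j * (star π) ^ (k - j) = (star π) ^ (k - j) * (u * π ^ j) by ring,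
        pow_succ, mul_dvd_mul_iff_left (pow_ne_zero _ hsπ0)] at hdvd
      rcases hsp.dvd_or_dvd hdvd with hd | hd
      · exact not_prime_dvd_norm_one hsp hu hd
      · exact hnd' (hsp.dvd_of_dvd_pow hd)
  refine ⟨hjj, ?_⟩
  subst hjj
  have hc : π ^ j * (star π) ^ (k - j) ≠ 0 :=
    mul_ne_zero (pow_ne_zero _ hπ0) (pow_ne_zero _ hsπ0)
  apply mul_right_cancel₀ hc
  calc u * (π ^ j * (star π) ^ (k - j)) = u * π ^ j * (star π) ^ (k - j) := by ring
    _ = u' * π ^ j * (star π) ^ (k - j) := h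
    _ = u' * (π ^ j * (star π) ^ (k - j)) := by ring

lemma gnorm_pow (z : ℤ[i]) (k : ℕ) : (z ^ k).norm = z.norm ^ k := by
  induction k with
  | zero => simp
  | succ k IH => rw [pow_succ, Zsqrtd.norm_mul, IH, pow_succ]

lemma mem_FS_pow {p k : ℕ} {z : ℤ[i]} : z ∈ FS (p ^ k) ↔ z.norm = (p : ℤ) ^ k := by
  rw [mem_FS]; push_cast; rfl

lemma FS_card_two_pow (k : ℕ) : (FS (2 ^ k)).card = 4 := by
  set π : ℤ[i] := ⟨1, 1⟩ with hπdef
  have hnπ : π.norm = 2 := by decide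
  have hπ : Prime π := prime_of_norm_prime (by rw [hnπ]; exact Int.prime_two)
  have hstar : star π = π * ⟨0, -1⟩ := by decide
  have hc : Zsqrtd.norm (⟨0, -1⟩ : ℤ[i]) = 1 := by decide
  have hπ0 : π ≠ 0 := hπ.ne_zero
  rw [← FS_one_card]
  symm
  apply Finset.card_bij (fun u _ => u * π ^ k)
  · intro u hu
    have hu1 : u.norm = 1 := by simpa using mem_FS.mp hu
    apply mem_FS_pow.mpr
    rw [Zsqrtd.norm_mul, hu1, gnorm_pow, hnπ, one_mul]
    norm_num
  · intro u hu u' hu' h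
    exact mul_right_cancel₀ (pow_ne_zero k hπ0) h
  · intro z hz
    have hznorm : z.norm = (2 : ℤ) ^ k := by exact_mod_cast mem_FS_pow.mp hz
    obtain ⟨u, j, hu1, hj, hrep⟩ := rep π hπ 2 (by exact_mod_cast hnπ) (by norm_num) k z
      (by exact_mod_cast hznorm)
    refine ⟨u * (⟨0, -1⟩ : ℤ[i]) ^ (k - j), ?_, ?_⟩
    · apply mem_FS.mpr
      rw [Zsqrtd.norm_mul, hu1, gnorm_pow, hc, one_pow, mul_one]
      norm_num
    · have hjk : j + (k - j) = k := by omega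
      calc u * (⟨0, -1⟩ : ℤ[i]) ^ (k - j) * π ^ k
          = u * (⟨0, -1⟩ : ℤ[i]) ^ (k - j) * π ^ (j + (k - j)) := by rw [hjk]
        _ = u * π ^ j * (π ^ (k - j) * (⟨0, -1⟩ : ℤ[i]) ^ (k - j)) := by
            rw [pow_add]; ring
        _ = u * π ^ j * (π * (⟨0, -1⟩ : ℤ[i])) ^ (k - j) := by rw [mul_pow]
        _ = u * π ^ j * (star π) ^ (k - j) := by rw [← hstar]
        _ = z := hrep.symm

lemma sq_ne_prime (p : ℕ) (hp : p.Prime) (a : ℤ) (h : a * a = (p : ℤ)) : False := by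
  have h1 : a.natAbs * a.natAbs = p := by
    have h2 : ((a.natAbs * a.natAbs : ℕ) : ℤ) = (p : ℤ) := by
      rw [Nat.cast_mul, Int.natAbs_mul_self']; exact h
    exact_mod_cast h2
  have h2 : a.natAbs ∣ p := ⟨a.natAbs, h1.symm⟩
  have h3 := hp.two_le
  rcases hp.eq_one_or_self_of_dvd _ h2 with h4 | h4
  · rw [h4] at h1; omega
  · rw [h4] at h1; nlinarith

lemma two_mul_sq_ne_prime_odd (p : ℕ) (hodd : p % 2 = 1) (a : ℤ)
    (h : 2 * (a * a) = (p : ℤ)) : False := by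
  have h1 : (2 : ℤ) ∣ (p : ℤ) := ⟨a * a, h.symm⟩
  have h2 : 2 ∣ p := by exact_mod_cast h1
  omega

/-- For odd prime `p`, a Gaussian prime of norm `p` does not divide its conjugate. -/
lemma not_dvd_star {p : ℕ} (hp : p.Prime) (hodd : p % 2 = 1) {π : ℤ[i]}
    (hπ : Prime π) (hsp : Prime (star π)) (hnπ : π.norm = p) : ¬ π ∣ star π := by
  intro hdvd
  obtain ⟨U, hU⟩ := hπ.irreducible.associated_of_dvd hsp.irreducible hdvd
  have hUnorm : (U : ℤ[i]).norm = 1 :=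
    (Zsqrtd.norm_eq_one_iff' (by norm_num) _).mpr (Units.isUnit U)
  have hpnorm : π.re * π.re + π.im * π.im = (p : ℤ) := by rw [← norm_eq, hnπ]
  rcases unit_mem hUnorm with h | h | h | h <;> rw [h] at hU
  · -- U = 1 : π.im = -π.im
    have him := congrArg Zsqrtd.im hU
    simp [Zsqrtd.im_mul, Zsqrtd.im_star] at him
    have : π.im = 0 := by omega
    rw [this] at hpnorm
    exact sq_ne_prime p hp π.re (by linarith)
  · -- U = -1 : π.re = 0
    have hre := congrArg Zsqrtd.re hU
    simp [Zsqrtd.re_mul, Zsqrtd.re_star] at hre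
    have : π.re = 0 := by omega
    rw [this] at hpnorm
    exact sq_ne_prime p hp π.im (by linarith)
  · -- U = i : π.re = -π.im
    have hre := congrArg Zsqrtd.re hU
    simp [Zsqrtd.re_mul, Zsqrtd.re_star] at hre
    have hsq : π.re * π.re = π.im * π.im := by rw [← hre]; ring
    apply two_mul_sq_ne_prime_odd p hodd π.im
    linarith [hpnorm, hsq]
  · -- U = -i : π.re = π.im
    have hre := congrArg Zsqrtd.re hU
    simp [Zsqrtd.re_mul, Zsqrtd.re_star] at hre
    have hsq : π.re * π.re = π.im * π.im := by rw [hre]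
    apply two_mul_sq_ne_prime_odd p hodd π.im
    linarith [hpnorm, hsq]

lemma FS_card_pow_one (p k : ℕ) (hp : p.Prime) (h41 : p % 4 = 1) :
    (FS (p ^ k)).card = 4 * (k + 1) := by
  obtain ⟨π, hπ, hnπ⟩ := exists_prime_norm p hp (by omega)
  have hsp : Prime (star π) := prime_of_norm_prime
    (by rw [Zsqrtd.norm_conj, hnπ]; exact Nat.prime_iff_prime_int.mp hp)
  have hodd : p % 2 = 1 := by omega
  have hnd : ¬ π ∣ star π := not_dvd_star hp hodd hπ hsp hnπ
  have hπ0 : π ≠ 0 := hπ.ne_zero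
  have hsπ0 : star π ≠ 0 := hsp.ne_zero
  have hcard : (FS 1 ×ˢ Finset.range (k + 1)).card = 4 * (k + 1) := by
    rw [Finset.card_product, FS_one_card, Finset.card_range]
  rw [← hcard]
  symm
  apply Finset.card_bij (fun q _ => q.1 * π ^ q.2 * (star π) ^ (k - q.2))
  · intro q hq
    obtain ⟨hq1, hq2⟩ := Finset.mem_product.mp hq
    have hu1 : q.1.norm = 1 := by simpa using mem_FS.mp hq1
    have hjk : q.2 ≤ k := by
      have := Finset.mem_range.mp hq2; omega
    apply mem_FS_pow.mpr
    rw [Zsqrtd.norm_mul, Zsqrtd.norm_mul, hu1, gnorm_pow, gnorm_pow, Zsqrtd.norm_conj, hnπ,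
      one_mul, ← pow_add]
    congr 1
    omega
  · intro q hq q' hq' h
    obtain ⟨hq1, hq2⟩ := Finset.mem_product.mp hq
    obtain ⟨hq1', hq2'⟩ := Finset.mem_product.mp hq'
    have hu1 : q.1.norm = 1 := by simpa using mem_FS.mp hq1
    have hu1' : q'.1.norm = 1 := by simpa using mem_FS.mp hq1'
    have hjk : q.2 ≤ k := by have := Finset.mem_range.mp hq2; omega
    have hjk' : q'.2 ≤ k := by have := Finset.mem_range.mp hq2'; omega
    obtain ⟨hj, hu⟩ := rep_inj π hπ hsp hnd hu1 hu1' hjk hjk' h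
    exact Prod.ext hu hj
  · intro z hz
    have hznorm : z.norm = (p : ℤ) ^ k := mem_FS_pow.mp hz
    obtain ⟨u, j, hu1, hj, hrep⟩ := rep π hπ p hnπ hp.pos k z hznorm
    exact ⟨(u, j), Finset.mem_product.mpr
      ⟨mem_FS.mpr (by rw [hu1]; norm_num), Finset.mem_range.mpr (by omega)⟩, hrep.symm⟩

lemma FS_card_pow_three (p k : ℕ) (hp : p.Prime) (h43 : p % 4 = 3) :
    (FS (p ^ k)).card = if k % 2 = 0 then 4 else 0 := by
  haveI := Fact.mk hp
  have hprime : Prime ((p : ℕ) : ℤ[i]) :=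
    GaussianInt.prime_of_nat_prime_of_mod_four_eq_three p h43
  have hp0 : ((p : ℕ) : ℤ[i]) ≠ 0 := hprime.ne_zero
  have key : ∀ z : ℤ[i], z ∈ FS (p ^ k) → ∃ i : ℕ, k = 2 * i ∧
      Associated z (((p : ℕ) : ℤ[i]) ^ i) := by
    intro z hz
    have hznorm : z.norm = (p : ℤ) ^ k := mem_FS_pow.mp hz
    have hdvd : z ∣ ((p : ℕ) : ℤ[i]) ^ k := by
      refine ⟨star z, ?_⟩
      have h1 := norm_cast_eq_mul_star z
      rw [hznorm] at h1
      rw [← h1]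
      push_cast
      ring
    obtain ⟨i, hik, hassoc⟩ := (dvd_prime_pow hprime k).mp hdvd
    have hni : z.norm = ((p : ℤ) * p) ^ i := by
      rw [Zsqrtd.norm_eq_of_associated (by norm_num) hassoc, gnorm_pow, Zsqrtd.norm_natCast]
    have hk2i : (p : ℤ) ^ k = (p : ℤ) ^ (2 * i) := by
      rw [← hznorm, hni, two_mul, pow_add]; ring
    have hknat : p ^ k = p ^ (2 * i) := by exact_mod_cast hk2i
    have : k = 2 * i := Nat.pow_right_injective hp.two_le hknat
    exact ⟨i, this, hassoc⟩
  by_cases hk : k % 2 = 0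
  · rw [if_pos hk]
    obtain ⟨j, hj⟩ : ∃ j, k = 2 * j := ⟨k / 2, by omega⟩
    rw [← FS_one_card]
    symm
    apply Finset.card_bij (fun u _ => u * ((p : ℕ) : ℤ[i]) ^ j)
    · intro u hu
      have hu1 : u.norm = 1 := by simpa using mem_FS.mp hu
      apply mem_FS_pow.mpr
      rw [Zsqrtd.norm_mul, hu1, gnorm_pow, Zsqrtd.norm_natCast, one_mul, hj]
      rw [two_mul, pow_add]
      ring
    · intro u hu u' hu' h
      exact mul_right_cancel₀ (pow_ne_zero j hp0) h
    · intro z hz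
      obtain ⟨i, hki, hassoc⟩ := key z hz
      have hij : i = j := by omega
      obtain ⟨U, hU⟩ := hassoc
      rw [hij] at hU
      refine ⟨(U⁻¹ : ℤ[i]ˣ), mem_FS.mpr ?_, ?_⟩
      · rw [(Zsqrtd.norm_eq_one_iff' (by norm_num) _).mpr (Units.isUnit _)]; norm_num
      · rw [← hU]
        calc ((U⁻¹ : ℤ[i]ˣ) : ℤ[i]) * (z * (U : ℤ[i]))
            = z * ((U : ℤ[i]) * ((U⁻¹ : ℤ[i]ˣ) : ℤ[i])) := by ring
          _ = z := by rw [Units.mul_inv, mul_one]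
  · rw [if_neg hk]
    rw [Finset.card_eq_zero]
    apply Finset.eq_empty_of_forall_notMem
    intro z hz
    obtain ⟨i, hki, _⟩ := key z hz
    omega

/-- χ as an arithmetic function. -/
def chiA : ArithmeticFunction ℤ := ⟨chi, by decide⟩

lemma chiA_mult : chiA.IsMultiplicative :=
  ArithmeticFunction.IsMultiplicative.iff_ne_zero.mpr
    ⟨chi_one, fun {m n} _ _ _ => chi_mul m n⟩

/-- Divisor sum of χ. -/
def D (n : ℕ) : ℤ := ∑ d ∈ n.divisors, chi d

lemma D_mul {m n : ℕ} (h : Nat.Coprime m n) : D (m * n) = D m * D n := by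
  have hz := ArithmeticFunction.isMultiplicative_zeta.natCast (R := ℤ)
  have := (hz.mul chiA_mult).map_mul_of_coprime h
  simp only [ArithmeticFunction.coe_zeta_mul_apply] at this; exact this

lemma chi_pow_one {p : ℕ} (h : p % 4 = 1) (i : ℕ) : chi (p ^ i) = 1 := by
  induction i with
  | zero => exact chi_one
  | succ i IH => rw [pow_succ, chi_mul, IH, one_mul]; simp [chi, h]

lemma D_pow_one {p : ℕ} (hp : p.Prime) (h : p % 4 = 1) (k : ℕ) : D (p ^ k) = k + 1 := by
  unfold D
  rw [Nat.sum_divisors_prime_pow hp, Finset.sum_congr rfl (fun i _ => chi_pow_one h i)]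
  simp

lemma chi_pow_three {p : ℕ} (h : p % 4 = 3) (i : ℕ) : chi (p ^ i) = (-1) ^ i := by
  induction i with
  | zero => exact chi_one
  | succ i IH =>
    rw [pow_succ, chi_mul, IH, pow_succ]
    congr 1
    simp [chi, h]

lemma sum_neg_one_pow (k : ℕ) :
    (∑ i ∈ Finset.range (k + 1), (-1 : ℤ) ^ i) = if k % 2 = 0 then 1 else 0 := by
  induction k with
  | zero => simp
  | succ k IH =>
    rw [Finset.sum_range_succ, IH]
    by_cases h : k % 2 = 0
    · rw [if_pos h, if_neg (by omega)]
      have h1 : (-1 : ℤ) ^ (k + 1) = -1 := Odd.neg_one_pow ⟨k / 2, by omega⟩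
      rw [h1]; ring
    · rw [if_neg h, if_pos (by omega)]
      have h1 : (-1 : ℤ) ^ (k + 1) = 1 := Even.neg_one_pow ⟨(k + 1) / 2, by omega⟩
      rw [h1]; ring

lemma D_pow_three {p : ℕ} (hp : p.Prime) (h : p % 4 = 3) (k : ℕ) :
    D (p ^ k) = if k % 2 = 0 then 1 else 0 := by
  unfold D
  rw [Nat.sum_divisors_prime_pow hp, Finset.sum_congr rfl (fun i _ => chi_pow_three h i)]
  exact sum_neg_one_pow k

lemma chi_two_pow (i : ℕ) : chi (2 ^ i) = if i = 0 then 1 else 0 := by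
  cases i with
  | zero => simpa using chi_one
  | succ i =>
    rw [if_neg (Nat.succ_ne_zero i)]
    have h24 : 2 ^ (i + 1) % 4 = 0 ∨ 2 ^ (i + 1) % 4 = 2 := by
      cases i with
      | zero => right; rfl
      | succ i =>
        left
        have h4 : 4 ∣ 2 ^ (i + 1 + 1) := ⟨2 ^ i, by ring⟩
        omega
    rcases h24 with h | h <;> simp [chi, h]

lemma D_two_pow (k : ℕ) : D (2 ^ k) = 1 := by
  unfold D
  rw [Nat.sum_divisors_prime_pow Nat.prime_two,
    Finset.sum_congr rfl (fun i _ => chi_two_pow i)]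
  simp

/-- **Jacobi's two-squares counting theorem** (Finset form). -/
theorem FS_card_eq : ∀ n : ℕ, 0 < n → ((FS n).card : ℤ) = 4 * D n := by
  intro n
  induction n using Nat.recOnPosPrimePosCoprime with
  | prime_pow p k hp hk =>
    intro _
    have hpp : p.Prime := hp
    by_cases h2 : p = 2
    · subst h2
      rw [FS_card_two_pow, D_two_pow]; norm_num
    · have hodd : p % 2 = 1 := hpp.eq_two_or_odd.resolve_left h2
      have h14 : p % 4 = 1 ∨ p % 4 = 3 := by omega
      rcases h14 with h | h
      · rw [FS_card_pow_one p k hpp h, D_pow_one hpp h]; push_cast; ring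
      · rw [FS_card_pow_three p k hpp h, D_pow_three hpp h]
        by_cases hk2 : k % 2 = 0 <;> simp [hk2]
  | zero => intro hn; exact absurd hn (by norm_num)
  | one =>
    intro _
    rw [FS_one_card]
    unfold D
    rw [Nat.divisors_one, Finset.sum_singleton, chi_one]
    norm_num
  | coprime a b ha hb hab IHa IHb =>
    intro _
    have hapos : 0 < a := by omega
    have hbpos : 0 < b := by omega
    have hmul := FS_card_mul hapos hbpos hab
    have hcast : ((FS a).card : ℤ) * (FS b).card = 4 * (FS (a * b)).card := by exact_mod_cast hmul
    rw [IHa hapos, IHb hbpos] at hcast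
    rw [D_mul hab]
    linarith [hcast]

lemma r_eq_FS_card (n : ℕ) : r n = (FS n).card := by
  have hinj : Function.Injective (fun p : ℤ × ℤ => (⟨p.1, p.2⟩ : ℤ[i])) := by
    intro p q h
    simp only [Zsqrtd.ext_iff] at h
    exact Prod.ext h.1 h.2
  unfold r
  rw [← Set.ncard_coe_finset, ← Set.ncard_image_of_injective _ hinj]
  congr 1
  ext z
  constructor
  · rintro ⟨⟨x, y⟩, hxy, rfl⟩
    simp only [Set.mem_setOf_eq] at hxy
    apply Finset.mem_coe.mpr
    apply mem_FS.mpr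
    rw [norm_eq]
    simp only
    rw [← hxy]; ring
  · intro hz
    refine ⟨(z.re, z.im), ?_, ?_⟩
    · simp only [Set.mem_setOf_eq]
      have h1 := mem_FS.mp (Finset.mem_coe.mp hz)
      rw [norm_eq] at h1
      rw [← h1]; ring
    · cases z; rfl

lemma xi_eq_even {d e : ℤ} (hd : d % 2 = 1) (h3 : ¬ ((3:ℤ) ∣ (2 * e - d))) (he : e % 2 = 0) :
    xi (2 * e - d) = (if d % 4 = 1 then 1 else -1) := by
  unfold xi
  split_ifs <;> omega

lemma xi_eq_odd {d e : ℤ} (hd : d % 2 = 1) (h3 : ¬ ((3:ℤ) ∣ (2 * e - d))) (he : e % 2 = 1) :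
    xi (2 * e - d) = -(if d % 4 = 1 then 1 else -1) := by
  unfold xi
  split_ifs <;> omega

lemma not_three_dvd {d e n : ℕ} (hde : d * e = n) (h3 : n % 3 = 1) :
    ¬ ((3:ℤ) ∣ (2 * (e:ℤ) - d)) := by
  intro hdvd
  have hzero : ((2 * (e:ℤ) - d : ℤ) : ZMod 3) = 0 :=
    (ZMod.intCast_zmod_eq_zero_iff_dvd _ 3).mpr hdvd
  push_cast at hzero
  have hd2e : (d : ZMod 3) = 2 * e := by linear_combination -hzero
  have hn3 : ((n : ℕ) : ZMod 3) = 1 := by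
    obtain ⟨t, ht⟩ : ∃ t, n = 3 * t + 1 := ⟨n / 3, by omega⟩
    rw [ht]
    push_cast
    have h30 : (3 : ZMod 3) = 0 := by decide
    rw [h30]
    ring
  have hprod : ((d : ZMod 3)) * e = n := by exact_mod_cast congrArg (Nat.cast : ℕ → ZMod 3) hde
  rw [hd2e, hn3] at hprod
  have : ∀ x : ZMod 3, 2 * x * x ≠ 1 := by decide
  exact this e hprod

lemma a6_eq (n : ℕ) (h3 : n % 3 = 1) :
    a6 n = (if n % 2 = 0 then 1 else -1) * D n := by
  unfold a6
  have hsum : ∀ d ∈ n.divisors.filter (fun d => Odd d),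
      xi (2 * ((n : ℤ) / (d : ℤ)) - d) = (if n % 2 = 0 then (1:ℤ) else -1) * chi d := by
    intro d hd
    obtain ⟨hdmem, hdodd⟩ := Finset.mem_filter.mp hd
    obtain ⟨hddvd, hn0⟩ := Nat.mem_divisors.mp hdmem
    have hde : d * (n / d) = n := Nat.mul_div_cancel' hddvd
    set e := n / d with he
    have hdodd' : d % 2 = 1 := Nat.odd_iff.mp hdodd
    have hdiv : (n : ℤ) / (d : ℤ) = (e : ℤ) := by
      rw [he]; exact (Int.natCast_ediv n d)
    have hepar : e % 2 = n % 2 := by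
      have h1 : (d * e) % 2 = n % 2 := by rw [hde]
      rw [Nat.mul_mod, hdodd', one_mul, Nat.mod_mod_of_dvd _ (dvd_refl 2)] at h1
      exact h1
    have hdoddZ : (d : ℤ) % 2 = 1 := by omega
    have h3' := not_three_dvd hde h3
    have hchi : chi d = (if (d:ℤ) % 4 = 1 then (1:ℤ) else -1) := by
      have h4 : (d:ℤ) % 4 = ((d % 4 : ℕ) : ℤ) := by omega
      unfold chi
      split_ifs <;> omega
    rw [hdiv, hchi]
    by_cases hpar : n % 2 = 0
    · have heZ : (e : ℤ) % 2 = 0 := by omega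
      rw [if_pos hpar, xi_eq_even hdoddZ h3' heZ, one_mul]
    · have heZ : (e : ℤ) % 2 = 1 := by omega
      rw [if_neg hpar, xi_eq_odd hdoddZ h3' heZ]
      ring
  rw [Finset.sum_congr rfl hsum, ← Finset.mul_sum]
  congr 1
  unfold D
  apply Finset.sum_filter_of_ne
  intro d _ hne
  rw [Nat.odd_iff]
  by_contra hd2
  have hh : d % 4 ≠ 1 ∧ d % 4 ≠ 3 := by omega
  simp [chi, hh.1, hh.2] at hne

theorem a6_three_mul_add_one (m : ℕ) :
    4 * a6 (3 * m + 1) = (-1) ^ (m + 1) * (r (3 * m + 1) : ℤ) := by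
  set n := 3 * m + 1 with hn_def
  have hn : 0 < n := by omega
  have h3 : n % 3 = 1 := by omega
  rw [a6_eq n h3]
  have hr : (r n : ℤ) = 4 * D n := by
    rw [r_eq_FS_card]
    exact_mod_cast FS_card_eq n hn
  rw [hr]
  have hsign : ((-1 : ℤ)) ^ (m + 1) = (if n % 2 = 0 then 1 else -1) := by
    rcases Nat.even_or_odd m with h | h
    · have h1 : n % 2 = 1 := by
        have := Nat.even_iff.mp h; omega
      rw [if_neg (by omega)]
      exact Odd.neg_one_pow (by simpa using h.add_one)
    · have h1 : n % 2 = 0 := by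
        have := Nat.odd_iff.mp h; omega
      rw [if_pos h1]
      exact Even.neg_one_pow (by simpa using h.add_one)
  rw [hsign]
  ring
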